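/- For n ≥ 1 let σ_n be the two-dimensional substitution on {1,2} with base rule 1 ↦ {[(0,0),1]}, 2 ↦ {[(0,0),2]} and concatenation rules: (a,a,(1,0)) ↦ (1,0) and (a,a,(0,1)) ↦ (0,1) for a ∈ {1,2}; (1,2,(1,0)) ↦ (n+1,0); (2,1,(1,0)) ↦ (1−n,0); (1,2,(0,1)) ↦ (n,1); (2,1,(0,1)) ↦ (−n,1). Then: (i) σ_n is non-overlapping on every C_{σ_n}-covered pattern P such that any two cells of P have first coordinates differing by strictly less than n; and (ii) σ_n is overlapping: in the C_{σ_n}-covered pattern P = {[(0,0),2],[(n,0),1]} ∪ {[(i,1),1] : 0 ≤ i ≤ n}, the images of the two distinct cells [(0,0),2] and [(n,0),1] overlap, i.e., there is a C_{σ_n}-path γ of P from [(0,0),2] to [(n,0),1] with supp(σ_base(2)) ∩ (ω_{σ_n}(γ) + supp(σ_base(1))) ≠ ∅. -/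

import Mathlib

open scoped Classical

/-- A combinatorial substitution on alphabet `A` with vectors in `V`:
a base rule sending each letter to a pattern, together with a deterministic
finite set of concatenation rules.  `rule t t' u = some v` encodes the
concatenation rule `(t, t', u) ↦ v`. -/
structure Subst (A : Type*) (V : Type*) [AddCommGroup V] where
  /-- the base rule -/
  base : A → Finset (V × A)
  /-- the image of a letter is a pattern: its cells have distinct vectors -/
  basePat : ∀ t : A, ∀ c ∈ base t, ∀ c' ∈ base t, c.1 = c'.1 → c = c'
  /-- the concatenation rules, as a partial function -/
  rule : A → A → V → Option V
  /-- there are finitely many concatenation rules -/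
  finiteRules : {u : V | ∃ t t', rule t t' u ≠ none}.Finite
  /-- determinism: no two rules with left-hand sides `(t,t',u)` and `(t,t',-u)` -/
  det : ∀ t t' u, (rule t t' u).isSome → (rule t t' (-u)).isSome → u = -u

/-- A pattern is a finite set of cells with pairwise distinct vectors. -/
def IsPattern {V A : Type*} (P : Finset (V × A)) : Prop :=
  ∀ c ∈ P, ∀ c' ∈ P, c.1 = c'.1 → c = c'

namespace Subst

variable {A V : Type*} [AddCommGroup V]

/-- `σ_rule(c, c')`: the relative position of the images of the two cells
`c`, `c'`, when some concatenation rule applies to them. -/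
def ruleVec (σ : Subst A V) (c c' : V × A) : Option V :=
  match σ.rule c.2 c'.2 (c'.1 - c.1) with
  | some v => some v
  | none => (σ.rule c'.2 c.2 (c.1 - c'.1)).map (fun v => -v)

/-- The image vector `ω_σ(γ)` of a path `γ`. -/
def omega (σ : Subst A V) (γ : List (V × A)) : V :=
  ((γ.zip γ.tail).map (fun p => (σ.ruleVec p.1 p.2).getD 0)).sum

/-- A `C_σ`-path: a nonempty sequence of cells in which any two consecutive
cells form a translated copy of a starting pattern of `σ`, and any two cells
with the same vector are equal. -/
def IsPath (σ : Subst A V) (γ : List (V × A)) : Prop :=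
  γ ≠ [] ∧ γ.Chain' (fun c c' => (σ.ruleVec c c').isSome) ∧
    ∀ c ∈ γ, ∀ c' ∈ γ, c.1 = c'.1 → c = c'

/-- A `C_σ`-path of the pattern `P`. -/
def IsPathOf (σ : Subst A V) (P : Finset (V × A)) (γ : List (V × A)) : Prop :=
  σ.IsPath γ ∧ ∀ c ∈ γ, c ∈ P

/-- A `C_σ`-loop of the pattern `P`. -/
def IsLoopOf (σ : Subst A V) (P : Finset (V × A)) (γ : List (V × A)) : Prop :=
  σ.IsPathOf P γ ∧ γ.head? = γ.getLast?

/-- `P` is `C_σ`-covered: any two of its cells are joined by a `C_σ`-path of `P`. -/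
def Covered (σ : Subst A V) (P : Finset (V × A)) : Prop :=
  ∀ c ∈ P, ∀ c' ∈ P,
    ∃ γ, σ.IsPathOf P γ ∧ γ.head? = some c ∧ γ.getLast? = some c'

/-- `σ` is consistent on `P`: any two `C_σ`-paths of `P` with the same first
and last cells have the same image vector. -/
def ConsistentOn (σ : Subst A V) (P : Finset (V × A)) : Prop :=
  ∀ γ γ' : List (V × A), σ.IsPathOf P γ → σ.IsPathOf P γ' →
    γ.head? = γ'.head? → γ.getLast? = γ'.getLast? → σ.omega γ = σ.omega γ'

/-- `σ` is consistent: it is consistent on every `C_σ`-covered pattern. -/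
def Consistent (σ : Subst A V) : Prop :=
  ∀ P : Finset (V × A), IsPattern P → σ.Covered P → σ.ConsistentOn P

/-- The support of the image of a letter. -/
noncomputable def supp (σ : Subst A V) (t : A) : Finset V :=
  (σ.base t).image Prod.fst

/-- `σ` is non-overlapping on `P`: the images of two distinct cells of `P`
joined by a `C_σ`-path of `P` have disjoint supports. -/
def NonOverlappingOn (σ : Subst A V) (P : Finset (V × A)) : Prop :=
  ∀ c ∈ P, ∀ c' ∈ P, c ≠ c' → ∀ γ, σ.IsPathOf P γ →
    γ.head? = some c → γ.getLast? = some c' →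
    ∀ b ∈ σ.supp c'.2, σ.omega γ + b ∉ σ.supp c.2

/-- `σ` is non-overlapping: it is non-overlapping on every `C_σ`-covered pattern. -/
def NonOverlapping (σ : Subst A V) : Prop :=
  ∀ P : Finset (V × A), IsPattern P → σ.Covered P → σ.NonOverlappingOn P

end Subst

/-- The two-letter alphabet `{1, 2}`. -/
inductive B : Type where
  | b1 : B
  | b2 : B
deriving DecidableEq

instance : Fintype B := ⟨{B.b1, B.b2}, fun x => by cases x <;> simp⟩

open B

/-- The vectors `v_1 = (0,0)` and `v_2 = (n,0)`. -/
def vB (n : ℕ) : B → ℤ × ℤ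
  | b1 => (0, 0)
  | b2 => ((n : ℤ), 0)

/-- The horizontal rules of `σ_n`. -/
def hruleN (n : ℕ) : B → B → Option (ℤ × ℤ)
  | b1, b1 => some (1, 0)
  | b2, b2 => some (1, 0)
  | b1, b2 => some ((n : ℤ) + 1, 0)
  | b2, b1 => some (1 - (n : ℤ), 0)

/-- The vertical rules of `σ_n`. -/
def vruleN (n : ℕ) : B → B → Option (ℤ × ℤ)
  | b1, b1 => some (0, 1)
  | b2, b2 => some (0, 1)
  | b1, b2 => some ((n : ℤ), 1)
  | b2, b1 => some (-(n : ℤ), 1)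

/-- The substitution `σ_n` of Example `overlapfar`:
`1 ↦ {[(0,0),1]}`, `2 ↦ {[(0,0),2]}`, with rules
`(a,a,(1,0)) ↦ (1,0)`, `(a,a,(0,1)) ↦ (0,1)`, `(1,2,(1,0)) ↦ (n+1,0)`,
`(2,1,(1,0)) ↦ (1-n,0)`, `(1,2,(0,1)) ↦ (n,1)`, `(2,1,(0,1)) ↦ (-n,1)`. -/
noncomputable def sigmaN (n : ℕ) : Subst B (ℤ × ℤ) where
  base t := {((0, 0), t)}
  basePat := by
    intro t c hc c' hc' _
    rw [Finset.mem_singleton] at hc hc'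
    rw [hc, hc']
  rule t t' u :=
    if u = ((1 : ℤ), (0 : ℤ)) then hruleN n t t'
    else if u = ((0 : ℤ), (1 : ℤ)) then vruleN n t t' else none
  finiteRules := by
    apply Set.Finite.subset
      ((Set.finite_singleton (((0 : ℤ), (1 : ℤ)) : ℤ × ℤ)).insert
        (((1 : ℤ), (0 : ℤ)) : ℤ × ℤ))
    rintro u ⟨t, t', h⟩
    try simp only at h
    split_ifs at h with h1 h2
    · exact Set.mem_insert_iff.2 (Or.inl h1)
    · exact Set.mem_insert_iff.2 (Or.inr h2)
    · exact absurd rfl h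
  det := by
    intro t t' u h1 h2
    exfalso
    try simp only at h1 h2
    have hu : u = ((1 : ℤ), (0 : ℤ)) ∨ u = ((0 : ℤ), (1 : ℤ)) := by
      split_ifs at h1 with hA hB
      · exact Or.inl hA
      · exact Or.inr hB
      · simp at h1
    have hnu : -u = ((1 : ℤ), (0 : ℤ)) ∨ -u = ((0 : ℤ), (1 : ℤ)) := by
      split_ifs at h2 with hC hD
      · exact Or.inl hC
      · exact Or.inr hD
      · simp at h2
    rcases hu with rfl | rfl <;> rcases hnu with h | h <;> revert h <;> decide

/-- The pattern `P_n = {[(0,0),2], [(n,0),1]} ∪ {[(i,1),1] : 0 ≤ i ≤ n}`. -/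
noncomputable def Pn (n : ℕ) : Finset ((ℤ × ℤ) × B) :=
  insert ((((0 : ℤ), (0 : ℤ)) : ℤ × ℤ), b2)
    (insert ((((n : ℤ), (0 : ℤ)) : ℤ × ℤ), b1)
      ((Finset.range (n + 1)).image fun i => ((((i : ℤ), (1 : ℤ)) : ℤ × ℤ), b1)))

namespace SigmaHelp
open B

lemma hrule_isSome (n : ℕ) (t t' : B) : (hruleN n t t').isSome := by
  cases t <;> cases t' <;> simp [hruleN]

lemma vrule_isSome (n : ℕ) (t t' : B) : (vruleN n t t').isSome := by
  cases t <;> cases t' <;> simp [vruleN]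

lemma rule_isSome_iff (n : ℕ) (t t' : B) (u : ℤ × ℤ) :
    ((sigmaN n).rule t t' u).isSome ↔ (u = (1,0) ∨ u = (0,1)) := by
  show (if u = ((1:ℤ),(0:ℤ)) then hruleN n t t'
    else if u = ((0:ℤ),(1:ℤ)) then vruleN n t t' else none).isSome ↔ _
  split_ifs with h1 h2
  · simp [h1, hrule_isSome]
  · simp [h2, vrule_isSome]
  · simp [h1, h2]

lemma ruleVec_isSome_or {A V : Type*} [AddCommGroup V] (σ : Subst A V)
    (c c' : V × A) :
    (σ.ruleVec c c').isSome =
      ((σ.rule c.2 c'.2 (c'.1 - c.1)).isSome || (σ.rule c'.2 c.2 (c.1 - c'.1)).isSome) := by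
  unfold Subst.ruleVec
  cases σ.rule c.2 c'.2 (c'.1 - c.1) <;> simp

lemma ruleVec_isSome_iff (n : ℕ) (c c' : (ℤ × ℤ) × B) :
    ((sigmaN n).ruleVec c c').isSome ↔
      (c'.1 - c.1 = (1,0) ∨ c'.1 - c.1 = (0,1) ∨
       c'.1 - c.1 = (-1,0) ∨ c'.1 - c.1 = (0,-1)) := by
  rw [ruleVec_isSome_or]
  simp only [Bool.or_eq_true, rule_isSome_iff]
  obtain ⟨⟨x, y⟩, t⟩ := c
  obtain ⟨⟨x', y'⟩, t'⟩ := c'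
  simp only [Prod.mk_sub_mk, Prod.mk.injEq]
  constructor
  · rintro ((⟨h1,h2⟩|⟨h1,h2⟩)|(⟨h1,h2⟩|⟨h1,h2⟩)) <;> omega
  · rintro (⟨h1,h2⟩|⟨h1,h2⟩|⟨h1,h2⟩|⟨h1,h2⟩) <;> omega

end SigmaHelp

namespace SigmaHelp
open B

/-- The potential function. -/
def phiN (n : ℕ) (c : (ℤ × ℤ) × B) : ℤ × ℤ :=
  (c.1.1 + (if c.2 = b2 then (n : ℤ) else 0), c.1.2)

lemma sigmaN_rule (n : ℕ) (t t' : B) (u : ℤ × ℤ) :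
    (sigmaN n).rule t t' u = if u = ((1:ℤ),(0:ℤ)) then hruleN n t t'
      else if u = ((0:ℤ),(1:ℤ)) then vruleN n t t' else none := rfl

lemma ruleVec_getD (n : ℕ) (c c' : (ℤ × ℤ) × B)
    (h : ((sigmaN n).ruleVec c c').isSome) :
    ((sigmaN n).ruleVec c c').getD 0 = phiN n c' - phiN n c := by
  rw [ruleVec_isSome_iff] at h
  obtain ⟨⟨x, y⟩, t⟩ := c
  obtain ⟨⟨x', y'⟩, t'⟩ := c'
  unfold Subst.ruleVec phiN
  simp only [Prod.mk_sub_mk, Prod.mk.injEq] at h ⊢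
  rcases h with ⟨h1, h2⟩ | ⟨h1, h2⟩ | ⟨h1, h2⟩ | ⟨h1, h2⟩ <;>
    rw [show x' - x = _ from h1, show y' - y = _ from h2] <;>
    rw [show x - x' = -(x' - x) by ring, show y - y' = -(y' - y) by ring,
      show x' - x = _ from h1, show y' - y = _ from h2] <;>
    cases t <;> cases t' <;>
    simp [sigmaN_rule, hruleN, vruleN, Prod.ext_iff] <;>
    omega

end SigmaHelp

namespace SigmaHelp
open B

lemma omega_cons_cons (n : ℕ) (c c' : (ℤ × ℤ) × B) (γ : List ((ℤ × ℤ) × B)) :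
    (sigmaN n).omega (c :: c' :: γ) =
      ((sigmaN n).ruleVec c c').getD 0 + (sigmaN n).omega (c' :: γ) := by
  simp [Subst.omega]

lemma omega_eq_phi (n : ℕ) : ∀ (γ : List ((ℤ × ℤ) × B)) (c : (ℤ × ℤ) × B),
    List.Chain' (fun a b => ((sigmaN n).ruleVec a b).isSome) (c :: γ) →
    ∀ d, (c :: γ).getLast? = some d →
    (sigmaN n).omega (c :: γ) = phiN n d - phiN n c
  | [], c, _, d, hd => by
      simp only [List.getLast?_singleton, Option.some.injEq] at hd
      subst hd
      simp [Subst.omega]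
  | c' :: γ, c, h, d, hd => by
      unfold List.Chain' at h
      rw [List.isChain_cons_cons] at h
      rw [List.getLast?_cons_cons] at hd
      rw [omega_cons_cons, omega_eq_phi n γ c' h.2 d hd, ruleVec_getD n c c' h.1]
      abel

lemma omega_head_last (n : ℕ) (γ : List ((ℤ × ℤ) × B)) (c c' : (ℤ × ℤ) × B)
    (hch : List.Chain' (fun a b => ((sigmaN n).ruleVec a b).isSome) γ)
    (hh : γ.head? = some c) (hl : γ.getLast? = some c') :
    (sigmaN n).omega γ = phiN n c' - phiN n c := by
  cases γ with
  | nil => simp at hh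
  | cons a γ =>
      simp only [List.head?_cons, Option.some.injEq] at hh
      subst hh
      exact omega_eq_phi n γ a hch c' hl

end SigmaHelp

namespace SigmaHelp
open B

lemma supp_eq (n : ℕ) (t : B) : (sigmaN n).supp t = {((0:ℤ),(0:ℤ))} := by
  show ({(((0:ℤ),(0:ℤ)), t)} : Finset ((ℤ×ℤ)×B)).image Prod.fst = _
  simp

lemma partI (n : ℕ) (hn : 1 ≤ n) (P : Finset ((ℤ × ℤ) × B)) (hP : IsPattern P)
    (hclose : ∀ c ∈ P, ∀ c' ∈ P, |c.1.1 - c'.1.1| < (n : ℤ)) :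
    (sigmaN n).NonOverlappingOn P := by
  intro c hc c' hc' hne γ hγ hh hl b hb hmem
  rw [supp_eq] at hb hmem
  simp only [Finset.mem_singleton] at hb hmem
  subst hb
  rw [show (((0:ℤ),(0:ℤ)) : ℤ × ℤ) = 0 from rfl, add_zero] at hmem
  have hom := omega_head_last n γ c c' hγ.1.2.1 hh hl
  rw [hom] at hmem
  have hphi : phiN n c' = phiN n c := by
    linear_combination (norm := abel) hmem
  apply hne
  apply hP c hc c' hc'
  have hd := hclose c hc c' hc'
  rw [abs_lt] at hd
  obtain ⟨⟨x, y⟩, t⟩ := c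
  obtain ⟨⟨x', y'⟩, t'⟩ := c'
  unfold phiN at hphi
  simp only [Prod.mk.injEq] at hphi ⊢
  simp only at hd
  have ht : t = t' := by
    cases t <;> cases t' <;> simp_all <;> omega
  subst ht
  cases t <;> simp_all <;> omega

end SigmaHelp

namespace SigmaHelp
open B

def Ac : (ℤ × ℤ) × B := ((0, 0), b2)
def Cc (n : ℕ) : (ℤ × ℤ) × B := (((n : ℤ), 0), b1)
def Bc (i : ℕ) : (ℤ × ℤ) × B := (((i : ℤ), 1), b1)

def segl : ℕ → ℕ → List ((ℤ × ℤ) × B)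
  | j, 0 => [Bc j]
  | j, m + 1 => Bc j :: segl (j + 1) m

lemma segl_ne_nil (j m : ℕ) : segl j m ≠ [] := by
  cases m <;> simp [segl]

lemma head?_segl (j m : ℕ) : (segl j m).head? = some (Bc j) := by
  cases m <;> simp [segl]

lemma getLast?_segl : ∀ j m, (segl j m).getLast? = some (Bc (j + m))
  | j, 0 => by simp [segl]
  | j, m + 1 => by
      rw [segl, List.getLast?_cons, getLast?_segl (j + 1) m,
        show j + 1 + m = j + (m + 1) by omega]
      rfl

lemma mem_segl : ∀ j m c, c ∈ segl j m ↔ ∃ i, j ≤ i ∧ i ≤ j + m ∧ c = Bc i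
  | j, 0, c => by
      simp only [segl, List.mem_singleton]
      constructor
      · rintro rfl; exact ⟨j, le_refl j, by omega, rfl⟩
      · rintro ⟨i, h1, h2, rfl⟩; congr 1; omega
  | j, m + 1, c => by
      simp only [segl, List.mem_cons, mem_segl (j + 1) m]
      constructor
      · rintro (rfl | ⟨i, h1, h2, rfl⟩)
        · exact ⟨j, le_refl j, by omega, rfl⟩
        · exact ⟨i, by omega, by omega, rfl⟩
      · rintro ⟨i, h1, h2, rfl⟩
        rcases eq_or_lt_of_le h1 with rfl | h
        · exact Or.inl rfl
        · exact Or.inr ⟨i, by omega, by omega, rfl⟩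

lemma Bc_inj {i i' : ℕ} (h : (Bc i).1 = (Bc i').1) : i = i' := by
  simp only [Bc, Prod.mk.injEq] at h
  exact_mod_cast h.1

lemma ruleVec_BB (n : ℕ) (j : ℕ) :
    ((sigmaN n).ruleVec (Bc j) (Bc (j + 1))).isSome := by
  rw [ruleVec_isSome_iff]
  left
  simp [Bc, Prod.ext_iff]

lemma chain'_segl (n : ℕ) : ∀ j m,
    List.Chain' (fun a b => ((sigmaN n).ruleVec a b).isSome) (segl j m)
  | j, 0 => by exact List.isChain_singleton _
  | j, m + 1 => by
      unfold List.Chain'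
      rw [segl, List.isChain_cons]
      refine ⟨?_, chain'_segl n (j + 1) m⟩
      intro y hy
      rw [head?_segl] at hy
      obtain rfl := Option.some_injective _ hy.symm
      exact ruleVec_BB n j

lemma mem_Pn (n : ℕ) (c : (ℤ × ℤ) × B) :
    c ∈ Pn n ↔ c = Ac ∨ c = Cc n ∨ ∃ i, i ≤ n ∧ c = Bc i := by
  rw [Pn, Finset.mem_insert, Finset.mem_insert]
  constructor
  · rintro (rfl | rfl | h)
    · exact Or.inl rfl
    · exact Or.inr (Or.inl rfl)
    · obtain ⟨i, hi, rfl⟩ := Finset.mem_image.mp h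
      simp at hi
      obtain ⟨k, hk, rfl⟩ := hi
      exact Or.inr (Or.inr ⟨k, by omega, rfl⟩)
  · rintro (rfl | rfl | ⟨i, hi, rfl⟩)
    · exact Or.inl rfl
    · exact Or.inr (Or.inl rfl)
    · refine Or.inr (Or.inr (Finset.mem_image.mpr ⟨(i : ℤ), ?_, rfl⟩))
      simp
      omega

lemma Bc_mem_Pn (n i : ℕ) (hi : i ≤ n) : Bc i ∈ Pn n :=
  (mem_Pn n _).mpr (Or.inr (Or.inr ⟨i, hi, rfl⟩))

lemma pattern_Pn (n : ℕ) (hn : 1 ≤ n) : IsPattern (Pn n) := by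
  intro c hc c' hc' hv
  rw [mem_Pn] at hc hc'
  rcases hc with rfl | rfl | ⟨i, hi, rfl⟩ <;>
      rcases hc' with rfl | rfl | ⟨i', hi', rfl⟩
  · rfl
  · exfalso; simp only [Ac, Cc, Prod.mk.injEq] at hv; omega
  · exfalso; simp only [Ac, Bc, Prod.mk.injEq] at hv; omega
  · exfalso; simp only [Ac, Cc, Prod.mk.injEq] at hv; omega
  · rfl
  · exfalso; simp only [Cc, Bc, Prod.mk.injEq] at hv; omega
  · exfalso; simp only [Ac, Bc, Prod.mk.injEq] at hv; omega
  · exfalso; simp only [Cc, Bc, Prod.mk.injEq] at hv; omega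
  · rw [Bc_inj hv]

end SigmaHelp

namespace SigmaHelp
open B

lemma ruleVec_isSome_symm (n : ℕ) {c c' : (ℤ × ℤ) × B}
    (h : ((sigmaN n).ruleVec c c').isSome) : ((sigmaN n).ruleVec c' c).isSome := by
  rw [ruleVec_isSome_iff] at h ⊢
  obtain ⟨⟨x, y⟩, t⟩ := c
  obtain ⟨⟨x', y'⟩, t'⟩ := c'
  simp only [Prod.mk_sub_mk, Prod.mk.injEq] at h ⊢
  rcases h with ⟨h1,h2⟩|⟨h1,h2⟩|⟨h1,h2⟩|⟨h1,h2⟩ <;> [skip; skip; skip; skip] <;>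
    first
    | exact Or.inr (Or.inr (Or.inl ⟨by omega, by omega⟩))
    | exact Or.inr (Or.inr (Or.inr ⟨by omega, by omega⟩))
    | exact Or.inl ⟨by omega, by omega⟩
    | exact Or.inr (Or.inl ⟨by omega, by omega⟩)

lemma isPathOf_reverse (n : ℕ) (P : Finset ((ℤ × ℤ) × B)) (γ : List ((ℤ × ℤ) × B))
    (h : (sigmaN n).IsPathOf P γ) : (sigmaN n).IsPathOf P γ.reverse := by
  obtain ⟨⟨hne, hch, hinj⟩, hmem⟩ := h
  refine ⟨⟨by simp [hne], ?_, ?_⟩, ?_⟩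
  · unfold List.Chain'
    rw [List.isChain_reverse]
    exact List.IsChain.imp (fun a b hab => ruleVec_isSome_symm n hab) hch
  · intro c hc c' hc'
    rw [List.mem_reverse] at hc hc'
    exact hinj c hc c' hc'
  · intro c hc
    rw [List.mem_reverse] at hc
    exact hmem c hc

end SigmaHelp

namespace SigmaHelp
open B

lemma ruleVec_AB (n : ℕ) : ((sigmaN n).ruleVec Ac (Bc 0)).isSome := by
  rw [ruleVec_isSome_iff]
  right; left
  simp [Ac, Bc, Prod.ext_iff]

lemma ruleVec_BC (n : ℕ) : ((sigmaN n).ruleVec (Bc n) (Cc n)).isSome := by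
  rw [ruleVec_isSome_iff]
  right; right; right
  simp [Cc, Bc, Prod.ext_iff]

lemma segl_inj (j m : ℕ) : ∀ c ∈ segl j m, ∀ c' ∈ segl j m, c.1 = c'.1 → c = c' := by
  intro c hc c' hc' hv
  obtain ⟨i, _, _, rfl⟩ := (mem_segl j m c).mp hc
  obtain ⟨i', _, _, rfl⟩ := (mem_segl j m c').mp hc'
  rw [Bc_inj hv]

lemma segl_mem_Pn (n j m : ℕ) (h : j + m ≤ n) : ∀ c ∈ segl j m, c ∈ Pn n := by
  intro c hc
  obtain ⟨i, _, hi, rfl⟩ := (mem_segl j m c).mp hc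
  exact Bc_mem_Pn n i (by omega)

lemma path_single (n : ℕ) (c : (ℤ × ℤ) × B) (hc : c ∈ Pn n) :
    ∃ γ, (sigmaN n).IsPathOf (Pn n) γ ∧ γ.head? = some c ∧ γ.getLast? = some c :=
  ⟨[c], ⟨⟨by simp, List.isChain_singleton _, by simp⟩, by simpa using hc⟩, by simp, by simp⟩

lemma path_BB (n i j : ℕ) (hij : i ≤ j) (hj : j ≤ n) :
    ∃ γ, (sigmaN n).IsPathOf (Pn n) γ ∧
      γ.head? = some (Bc i) ∧ γ.getLast? = some (Bc j) := by
  refine ⟨segl i (j - i), ⟨⟨segl_ne_nil _ _, chain'_segl n _ _, segl_inj _ _⟩,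
    segl_mem_Pn n i (j - i) (by omega)⟩, head?_segl _ _, ?_⟩
  rw [getLast?_segl, show i + (j - i) = j by omega]

lemma path_AB (n j : ℕ) (hj : j ≤ n) :
    ∃ γ, (sigmaN n).IsPathOf (Pn n) γ ∧
      γ.head? = some Ac ∧ γ.getLast? = some (Bc j) := by
  refine ⟨Ac :: segl 0 j, ⟨⟨by simp, ?_, ?_⟩, ?_⟩, by simp, ?_⟩
  · unfold List.Chain'
    rw [List.isChain_cons]
    refine ⟨?_, chain'_segl n _ _⟩
    intro y hy
    rw [head?_segl] at hy
    obtain rfl := Option.some_injective _ hy.symm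
    exact ruleVec_AB n
  · intro c hc c' hc' hv
    rcases List.mem_cons.mp hc with rfl | hc <;>
        rcases List.mem_cons.mp hc' with rfl | hc'
    · rfl
    · exfalso
      obtain ⟨k, _, _, rfl⟩ := (mem_segl 0 j c').mp hc'
      simp [Ac, Bc, Prod.ext_iff] at hv
    · exfalso
      obtain ⟨k, _, _, rfl⟩ := (mem_segl 0 j c).mp hc
      simp [Ac, Bc, Prod.ext_iff] at hv
    · exact segl_inj 0 j c hc c' hc' hv
  · intro c hc
    rcases List.mem_cons.mp hc with rfl | hc
    · exact (mem_Pn n _).mpr (Or.inl rfl)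
    · exact segl_mem_Pn n 0 j (by omega) c hc
  · rw [List.getLast?_cons, getLast?_segl]
    simp

lemma path_BC (n i : ℕ) (hi : i ≤ n) :
    ∃ γ, (sigmaN n).IsPathOf (Pn n) γ ∧
      γ.head? = some (Bc i) ∧ γ.getLast? = some (Cc n) := by
  refine ⟨segl i (n - i) ++ [Cc n], ⟨⟨by simp, ?_, ?_⟩, ?_⟩, ?_, ?_⟩
  · unfold List.Chain'
    rw [List.isChain_append]
    refine ⟨chain'_segl n _ _, by simp, ?_⟩
    intro x hx y hy
    rw [getLast?_segl, show i + (n - i) = n by omega] at hx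
    simp only [Option.mem_def, Option.some.injEq, List.head?_cons] at hx hy
    subst hx; subst hy
    exact ruleVec_BC n
  · intro c hc c' hc' hv
    rcases List.mem_append.mp hc with hc | hc <;>
        rcases List.mem_append.mp hc' with hc' | hc'
    · exact segl_inj _ _ c hc c' hc' hv
    · exfalso
      obtain ⟨k, _, _, rfl⟩ := (mem_segl _ _ c).mp hc
      simp only [List.mem_singleton] at hc'; subst hc'
      simp [Cc, Bc, Prod.ext_iff] at hv
    · exfalso
      obtain ⟨k, _, _, rfl⟩ := (mem_segl _ _ c').mp hc'
      simp only [List.mem_singleton] at hc; subst hc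
      simp [Cc, Bc, Prod.ext_iff] at hv
    · simp only [List.mem_singleton] at hc hc'; rw [hc, hc']
  · intro c hc
    rcases List.mem_append.mp hc with hc | hc
    · exact segl_mem_Pn n i (n - i) (by omega) c hc
    · simp only [List.mem_singleton] at hc; subst hc
      exact (mem_Pn n _).mpr (Or.inr (Or.inl rfl))
  · rw [List.head?_append_of_ne_nil]
    · exact head?_segl _ _
    · exact segl_ne_nil _ _
  · simp

end SigmaHelp

namespace SigmaHelp
open B

lemma path_AC (n : ℕ) (hn : 1 ≤ n) :
    (sigmaN n).IsPathOf (Pn n) (Ac :: (segl 0 n ++ [Cc n])) ∧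
      (Ac :: (segl 0 n ++ [Cc n])).head? = some Ac ∧
      (Ac :: (segl 0 n ++ [Cc n])).getLast? = some (Cc n) := by
  refine ⟨⟨⟨by simp, ?_, ?_⟩, ?_⟩, by simp, by
    rw [List.getLast?_cons]
    simp⟩
  · unfold List.Chain'
    rw [List.isChain_cons, List.isChain_append]
    refine ⟨?_, chain'_segl n _ _, by simp, ?_⟩
    · intro y hy
      rw [List.head?_append_of_ne_nil _ (segl_ne_nil _ _), head?_segl] at hy
      obtain rfl := Option.some_injective _ hy.symm
      exact ruleVec_AB n
    · intro x hx y hy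
      rw [getLast?_segl, Nat.zero_add] at hx
      simp only [Option.mem_def, Option.some.injEq, List.head?_cons] at hx hy
      subst hx; subst hy
      exact ruleVec_BC n
  · intro c hc c' hc' hv
    have key : ∀ d ∈ Ac :: (segl 0 n ++ [Cc n]),
        d = Ac ∨ d = Cc n ∨ ∃ i, i ≤ n ∧ d = Bc i := by
      intro d hd
      rcases List.mem_cons.mp hd with rfl | hd
      · exact Or.inl rfl
      · rcases List.mem_append.mp hd with hd | hd
        · obtain ⟨i, _, hi, rfl⟩ := (mem_segl _ _ d).mp hd
          exact Or.inr (Or.inr ⟨i, by omega, rfl⟩)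
        · simp only [List.mem_singleton] at hd
          exact Or.inr (Or.inl hd)
    rcases key c hc with rfl | rfl | ⟨i, hi, rfl⟩ <;>
        rcases key c' hc' with rfl | rfl | ⟨i', hi', rfl⟩
    · rfl
    · exfalso; simp only [Ac, Cc, Prod.mk.injEq] at hv; omega
    · exfalso; simp only [Ac, Bc, Prod.mk.injEq] at hv; omega
    · exfalso; simp only [Ac, Cc, Prod.mk.injEq] at hv; omega
    · rfl
    · exfalso; simp only [Cc, Bc, Prod.mk.injEq] at hv; omega
    · exfalso; simp only [Ac, Bc, Prod.mk.injEq] at hv; omega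
    · exfalso; simp only [Cc, Bc, Prod.mk.injEq] at hv; omega
    · rw [Bc_inj hv]
  · intro c hc
    rcases List.mem_cons.mp hc with rfl | hc
    · exact (mem_Pn n _).mpr (Or.inl rfl)
    · rcases List.mem_append.mp hc with hc | hc
      · exact segl_mem_Pn n 0 n (by omega) c hc
      · simp only [List.mem_singleton] at hc; subst hc
        exact (mem_Pn n _).mpr (Or.inr (Or.inl rfl))

lemma covered_Pn (n : ℕ) (hn : 1 ≤ n) : (sigmaN n).Covered (Pn n) := by
  have hrev : ∀ c c' : (ℤ × ℤ) × B,
      (∃ γ, (sigmaN n).IsPathOf (Pn n) γ ∧ γ.head? = some c ∧ γ.getLast? = some c') →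
      ∃ γ, (sigmaN n).IsPathOf (Pn n) γ ∧ γ.head? = some c' ∧ γ.getLast? = some c := by
    rintro c c' ⟨γ, hγ, hh, hl⟩
    exact ⟨γ.reverse, isPathOf_reverse n _ γ hγ,
      by rw [List.head?_reverse, hl], by rw [List.getLast?_reverse, hh]⟩
  intro c hc c' hc'
  rcases (mem_Pn n c).mp hc with rfl | rfl | ⟨i, hi, rfl⟩ <;>
      rcases (mem_Pn n c').mp hc' with rfl | rfl | ⟨i', hi', rfl⟩
  · exact path_single n _ hc
  · exact ⟨_, (path_AC n hn).1, (path_AC n hn).2⟩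
  · exact path_AB n i' hi'
  · exact hrev _ _ ⟨_, (path_AC n hn).1, (path_AC n hn).2⟩
  · exact path_single n _ hc
  · exact hrev _ _ (path_BC n i' hi')
  · exact hrev _ _ (path_AB n i hi)
  · exact path_BC n i hi
  · rcases le_total i i' with h | h
    · exact path_BB n i i' h hi'
    · exact hrev _ _ (path_BB n i' i h hi)

end SigmaHelp

namespace SigmaHelp
open B

lemma omega_AC (n : ℕ) (hn : 1 ≤ n) :
    (sigmaN n).omega (Ac :: (segl 0 n ++ [Cc n])) = 0 := by
  obtain ⟨⟨⟨_, hch, _⟩, _⟩, hh, hl⟩ := path_AC n hn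
  rw [omega_head_last n _ Ac (Cc n) hch hh hl]
  simp [phiN, Ac, Cc, Prod.ext_iff]

lemma overlap_witness (n : ℕ) (hn : 1 ≤ n) :
    ∃ γ : List ((ℤ × ℤ) × B),
      (sigmaN n).IsPathOf (Pn n) γ ∧
      γ.head? = some ((((0 : ℤ), (0 : ℤ)) : ℤ × ℤ), b2) ∧
      γ.getLast? = some ((((n : ℤ), (0 : ℤ)) : ℤ × ℤ), b1) ∧
      ∃ v ∈ (sigmaN n).supp b1, (sigmaN n).omega γ + v ∈ (sigmaN n).supp b2 := by
  obtain ⟨hpath, hh, hl⟩ := path_AC n hn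
  refine ⟨Ac :: (segl 0 n ++ [Cc n]), hpath, hh, hl, ((0:ℤ),(0:ℤ)), ?_, ?_⟩
  · rw [supp_eq]; simp
  · rw [supp_eq, omega_AC n hn]; simp

end SigmaHelp

open SigmaHelp in
/-- Example `overlapfar`.  For `n ≥ 1`:
(i) `σ_n` is non-overlapping on every `C_{σ_n}`-covered pattern whose cells
have first coordinates pairwise differing by strictly less than `n`;
(ii) `σ_n` is overlapping: in the `C_{σ_n}`-covered pattern
`P_n = {[(0,0),2], [(n,0),1]} ∪ {[(i,1),1] : 0 ≤ i ≤ n}`, the images of the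
distinct cells `[(0,0),2]` and `[(n,0),1]` overlap. -/
theorem sigmaN_overlapping (n : ℕ) (hn : 1 ≤ n) :
    (∀ P : Finset ((ℤ × ℤ) × B), IsPattern P → (sigmaN n).Covered P →
      (∀ c ∈ P, ∀ c' ∈ P, |c.1.1 - c'.1.1| < (n : ℤ)) →
      (sigmaN n).NonOverlappingOn P) ∧
    ¬ (sigmaN n).NonOverlapping ∧
    (sigmaN n).Covered (Pn n) ∧
    ((((0 : ℤ), (0 : ℤ)) : ℤ × ℤ), b2) ≠ ((((n : ℤ), (0 : ℤ)) : ℤ × ℤ), b1) ∧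
    ∃ γ : List ((ℤ × ℤ) × B),
      (sigmaN n).IsPathOf (Pn n) γ ∧
      γ.head? = some ((((0 : ℤ), (0 : ℤ)) : ℤ × ℤ), b2) ∧
      γ.getLast? = some ((((n : ℤ), (0 : ℤ)) : ℤ × ℤ), b1) ∧
      ∃ v ∈ (sigmaN n).supp b1, (sigmaN n).omega γ + v ∈ (sigmaN n).supp b2 := by
  refine ⟨fun P hP hcov hclose => partI n hn P hP hclose, ?_, covered_Pn n hn, ?_, overlap_witness n hn⟩
  · intro h
    obtain ⟨γ, hγ, hh, hl, v, hv, hmem⟩ := overlap_witness n hn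
    exact h (Pn n) (pattern_Pn n hn) (covered_Pn n hn)
      Ac ((mem_Pn n _).mpr (Or.inl rfl)) (Cc n) ((mem_Pn n _).mpr (Or.inr (Or.inl rfl)))
      (by simp [Ac, Cc]) γ hγ hh hl v hv hmem
  · simp [Prod.ext_iff]
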